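/- Let f, g be modular forms of integer weights k, ℓ on a lattice Γ ⊂ SL₂(ℝ). Then for every n ≥ 0 the Rankin–Cohen bracket [f,g]_n^{(k,ℓ)} = Σ_{i=0}^n (-1)^i·C(n+k-1,n-i)·C(n+ℓ-1,i)·D^i(f)·D^{n-i}(g) satisfies [f|_k γ, g|_ℓ γ]_n^{(k,ℓ)} = [f,g]_n^{(k,ℓ)}|_{k+ℓ+2n} γ for all γ ∈ SL₂(ℝ); in particular [f,g]_n^{(k,ℓ)} transforms like a modular form of weight k+ℓ+2n on Γ. -/

import Mathlib

open Complex Finset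

noncomputable section

abbrev SL2R := Matrix.SpecialLinearGroup (Fin 2) ℝ

instance : TopologicalSpace SL2R := instTopologicalSpaceSubtype

/-- The upper half-plane, as a subset of `ℂ`. -/
def UHP : Set ℂ := {z : ℂ | 0 < z.im}

/-- Möbius action of `γ ∈ SL₂(ℝ)` on the upper half-plane. -/
def mact (γ : SL2R) (τ : ℂ) : ℂ :=
  ((γ.1 0 0 : ℝ) * τ + (γ.1 0 1 : ℝ)) / ((γ.1 1 0 : ℝ) * τ + (γ.1 1 1 : ℝ))

/-- Weight `K` slash action: `(f|_K γ)(τ) = (cτ+d)^{-K} f(γτ)`. -/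
def slashK (K : ℤ) (γ : SL2R) (f : ℂ → ℂ) (τ : ℂ) : ℂ :=
  ((γ.1 1 0 : ℝ) * τ + (γ.1 1 1 : ℝ)) ^ (-K) * f (mact γ τ)

/-- A lattice in `SL₂(ℝ)`: a discrete subgroup of finite covolume. -/
def IsLattice (Γ : Subgroup SL2R) : Prop :=
  DiscreteTopology Γ ∧
    ∃ F : Set ℂ, F ⊆ UHP ∧ MeasurableSet F ∧
      (∀ τ ∈ UHP, ∃ γ ∈ Γ, mact γ τ ∈ F) ∧
      (∫⁻ z in F, ENNReal.ofReal (1 / z.im ^ 2)) < ⊤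

/-- The normalized derivative `D = (2πi)⁻¹ d/dτ`. -/
def Dop (f : ℂ → ℂ) : ℂ → ℂ := fun τ => (2 * ↑Real.pi * I)⁻¹ * deriv f τ

/-- Generalized binomial coefficient `C(a,b) = a(a-1)⋯(a-b+1)/b!` for complex `a`. -/
def genChooseC (a : ℂ) (b : ℕ) : ℂ := (∏ i ∈ Finset.range b, (a - i)) / (b.factorial : ℂ)

/-- The `n`-th Rankin–Cohen bracket of weights `k, ℓ ∈ ℤ`:
`[f,g]_n^{(k,ℓ)} = Σ_{i=0}^n (-1)^i·C(n+k-1,n-i)·C(n+ℓ-1,i)·D^i(f)·D^{n-i}(g)`. -/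
def RCbracketZ (f g : ℂ → ℂ) (k l : ℤ) (n : ℕ) : ℂ → ℂ := fun τ =>
  ∑ i ∈ Finset.range (n + 1),
    (-1 : ℂ) ^ i * genChooseC ((n : ℂ) + (k : ℂ) - 1) (n - i) *
      genChooseC ((n : ℂ) + (l : ℂ) - 1) i * Dop^[i] f τ * Dop^[n - i] g τ

-- auxiliary defs
def jj (γ : SL2R) (τ : ℂ) : ℂ := ((γ.1 1 0 : ℝ) : ℂ) * τ + ((γ.1 1 1 : ℝ) : ℂ)

lemma isOpen_UHP : IsOpen UHP := isOpen_lt continuous_const Complex.continuous_im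

lemma det_rel (γ : SL2R) :
    ((γ.1 0 0 : ℝ) : ℂ) * ((γ.1 1 1 : ℝ) : ℂ) - ((γ.1 0 1 : ℝ) : ℂ) * ((γ.1 1 0 : ℝ) : ℂ) = 1 := by
  have h := γ.2
  rw [Matrix.det_fin_two] at h
  exact_mod_cast h

lemma jj_ne (γ : SL2R) {τ : ℂ} (hτ : τ ∈ UHP) : jj γ τ ≠ 0 := by
  intro h
  have him : ((γ.1 1 0 : ℝ) : ℂ).im = 0 := by simp
  have h1 : (γ.1 1 0 : ℝ) * τ.im = 0 := by
    have := congrArg Complex.im h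
    simpa [jj] using this
  have hτ' : (0:ℝ) < τ.im := hτ
  rcases mul_eq_zero.mp h1 with hc | hi
  · -- c = 0, then d = 0 from re part, contradicting det
    have h2 : (γ.1 1 0 : ℝ) * τ.re + (γ.1 1 1 : ℝ) = 0 := by
      have := congrArg Complex.re h
      simpa [jj] using this
    rw [hc, zero_mul, zero_add] at h2
    have := det_rel γ
    rw [show ((γ.1 1 0 : ℝ) : ℂ) = 0 by norm_cast,
      show ((γ.1 1 1 : ℝ) : ℂ) = 0 by norm_cast] at this
    simp at this
  · linarith

lemma mact_mem (γ : SL2R) {τ : ℂ} (hτ : τ ∈ UHP) : mact γ τ ∈ UHP := by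
  have hne := jj_ne γ hτ
  have hτ' : (0:ℝ) < τ.im := hτ
  show 0 < (mact γ τ).im
  rw [mact, Complex.div_im]
  have hd : ((γ.1 0 0 : ℝ) * τ + (γ.1 0 1 : ℝ) : ℂ).im = (γ.1 0 0 : ℝ) * τ.im := by simp
  have hd2 : ((γ.1 0 0 : ℝ) * τ + (γ.1 0 1 : ℝ) : ℂ).re = (γ.1 0 0 : ℝ) * τ.re + (γ.1 0 1 : ℝ) := by simp
  have he : ((γ.1 1 0 : ℝ) * τ + (γ.1 1 1 : ℝ) : ℂ).im = (γ.1 1 0 : ℝ) * τ.im := by simp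
  have he2 : ((γ.1 1 0 : ℝ) * τ + (γ.1 1 1 : ℝ) : ℂ).re = (γ.1 1 0 : ℝ) * τ.re + (γ.1 1 1 : ℝ) := by simp
  rw [hd, hd2, he, he2]
  have hns : 0 < Complex.normSq ((γ.1 1 0 : ℝ) * τ + (γ.1 1 1 : ℝ)) := by
    apply Complex.normSq_pos.mpr
    simpa [jj] using hne
  have hdet : (γ.1 0 0 : ℝ) * (γ.1 1 1 : ℝ) - (γ.1 0 1 : ℝ) * (γ.1 1 0 : ℝ) = 1 := by
    have h := γ.2
    rw [Matrix.det_fin_two] at h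
    linarith [h]
  have hnum : (γ.1 0 0 : ℝ) * τ.im * ((γ.1 1 0 : ℝ) * τ.re + (γ.1 1 1 : ℝ))
      - ((γ.1 0 0 : ℝ) * τ.re + (γ.1 0 1 : ℝ)) * ((γ.1 1 0 : ℝ) * τ.im) = τ.im := by
    linear_combination τ.im * hdet
  rw [div_sub_div_same, hnum]
  positivity

-- chunk 2: appended to a.lean content
lemma diffOn_iter {f : ℂ → ℂ} (hf : DifferentiableOn ℂ f UHP) (r : ℕ) :
    DifferentiableOn ℂ (Dop^[r] f) UHP := by
  induction r with
  | zero => simpa using hf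
  | succ r ih =>
      rw [Function.iterate_succ_apply']
      have : DifferentiableOn ℂ (deriv (Dop^[r] f)) UHP :=
        ((ih.analyticOnNhd isOpen_UHP).deriv).differentiableOn
      exact fun x hx => ((this x hx).const_smul ((2 * ↑Real.pi * I)⁻¹ : ℂ)).congr
        (fun y _ => by simp [Dop, smul_eq_mul]) (by simp [Dop, smul_eq_mul])

lemma deriv_iter_eq {f : ℂ → ℂ} (r : ℕ) (x : ℂ) :
    deriv (Dop^[r] f) x = (2 * ↑Real.pi * I) * Dop^[r+1] f x := by
  rw [Function.iterate_succ_apply', Dop, ← mul_assoc,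
    mul_inv_cancel₀ Complex.two_pi_I_ne_zero, one_mul]

lemma hasDerivAt_jj (γ : SL2R) (τ : ℂ) :
    HasDerivAt (jj γ) (((γ.1 1 0 : ℝ) : ℂ)) τ := by
  exact (((hasDerivAt_id τ).const_mul (((γ.1 1 0 : ℝ) : ℂ))).add_const (((γ.1 1 1 : ℝ) : ℂ))).congr_deriv (mul_one _)

lemma hasDerivAt_mact (γ : SL2R) {τ : ℂ} (hτ : τ ∈ UHP) :
    HasDerivAt (mact γ) ((jj γ τ) ^ (-2 : ℤ)) τ := by
  have hne : jj γ τ ≠ 0 := jj_ne γ hτ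
  have h1 : HasDerivAt (fun σ : ℂ => ((γ.1 0 0 : ℝ) : ℂ) * σ + ((γ.1 0 1 : ℝ) : ℂ))
      (((γ.1 0 0 : ℝ) : ℂ)) τ := by
    simpa using ((hasDerivAt_id τ).const_mul (((γ.1 0 0 : ℝ) : ℂ))).add_const (((γ.1 0 1 : ℝ) : ℂ))
  have h2 := hasDerivAt_jj γ τ
  have h := h1.div h2 hne
  have : mact γ = fun σ : ℂ =>
      (((γ.1 0 0 : ℝ) : ℂ) * σ + ((γ.1 0 1 : ℝ) : ℂ)) / jj γ σ := by
    funext σ; rfl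
  rw [this]
  refine h.congr_deriv ?_
  have hnum : ((γ.1 0 0 : ℝ) : ℂ) * jj γ τ
      - (((γ.1 0 0 : ℝ) : ℂ) * τ + ((γ.1 0 1 : ℝ) : ℂ)) * ((γ.1 1 0 : ℝ) : ℂ) = 1 := by
    have := det_rel γ
    simp only [jj]
    ring_nf
    linear_combination this
  rw [hnum]
  simp only [zpow_neg, one_div]
  norm_cast

-- chunk 3: coefficients
def cE (γ : SL2R) : ℂ := (2 * ↑Real.pi * I)⁻¹ * ((γ.1 1 0 : ℝ) : ℂ)

def coA (K : ℤ) (γ : SL2R) (m r : ℕ) : ℂ :=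
  (m.choose r : ℂ) * (-1) ^ (m - r) * (∏ i ∈ range (m - r), ((K : ℂ) + r + i)) * (cE γ) ^ (m - r)

def termE (K : ℤ) (γ : SL2R) (f : ℂ → ℂ) (m r : ℕ) (τ : ℂ) : ℂ :=
  coA K γ m r * ((jj γ τ) ^ (-(K + m + r) : ℤ) * Dop^[r] f (mact γ τ))

lemma coA_self (K : ℤ) (γ : SL2R) (m : ℕ) : coA K γ m m = 1 := by
  simp [coA]

lemma coA_top (K : ℤ) (γ : SL2R) (m : ℕ) : coA K γ m (m + 1) = 0 := by
  simp [coA, Nat.choose_succ_self]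

lemma coA_zero (K : ℤ) (γ : SL2R) (m : ℕ) :
    coA K γ (m + 1) 0 = -((K : ℂ) + m) * cE γ * coA K γ m 0 := by
  simp only [coA, Nat.choose_zero_right, Nat.cast_one, Nat.sub_zero, Nat.cast_zero,
    prod_range_succ, pow_succ]
  push_cast
  ring

lemma coA_succ (K : ℤ) (γ : SL2R) (m u : ℕ) (hu : u ≤ m) :
    coA K γ (m + 1) (u + 1)
      = -((K : ℂ) + m + (u + 1)) * cE γ * coA K γ m (u + 1) + coA K γ m u := by
  rcases Nat.lt_or_ge u m with hlt | hge
  · obtain ⟨q, hq⟩ : ∃ q, m = u + (q + 1) := ⟨m - u - 1, by omega⟩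
    subst hq
    have e1 : u + (q + 1) + 1 - (u + 1) = q + 1 := by omega
    have e2 : u + (q + 1) - (u + 1) = q := by omega
    have e3 : u + (q + 1) - u = q + 1 := by omega
    simp only [coA, e1, e2, e3]
    have hp1 : (∏ i ∈ range (q + 1), ((K : ℂ) + (u + 1 : ℕ) + i))
        = (∏ i ∈ range q, ((K : ℂ) + (u + 1 : ℕ) + i)) * ((K : ℂ) + u + (q + 1)) := by
      rw [prod_range_succ]; push_cast; ring
    have hp2 : (∏ i ∈ range (q + 1), ((K : ℂ) + u + i))
        = ((K : ℂ) + u) * ∏ i ∈ range q, ((K : ℂ) + (u + 1 : ℕ) + i) := by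
      rw [prod_range_succ']
      have : ∀ i ∈ range q, ((K : ℂ) + u + (i + 1 : ℕ)) = ((K : ℂ) + (u + 1 : ℕ) + i) := by
        intro i _; push_cast; ring
      rw [prod_congr rfl this]; push_cast; ring
    rw [hp1, hp2]
    have hpa : ((u + (q + 1) + 1).choose (u + 1) : ℂ)
        = ((u + (q + 1)).choose (u + 1) : ℂ) + ((u + (q + 1)).choose u : ℂ) := by
      rw [Nat.choose_succ_succ (u + (q + 1)) u]; push_cast; ring
    have hps : ((u + (q + 1)).choose (u + 1) : ℂ) * (u + 1)
        = ((u + (q + 1)).choose u : ℂ) * (q + 1) := by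
      have h := Nat.choose_succ_right_eq (u + (q + 1)) u
      have h2 : u + (q + 1) - u = q + 1 := by omega
      rw [h2] at h
      exact_mod_cast congrArg (Nat.cast : ℕ → ℂ) h
    push_cast at hpa hps ⊢
    linear_combination (((-1 : ℂ)) ^ (q + 1) * (∏ i ∈ range q, ((K : ℂ) + ((u : ℂ) + 1) + i))
      * cE γ ^ (q + 1)) * (((K : ℂ) + u + q + 1) * hpa - hps)
  · have hum : u = m := le_antisymm hu hge
    subst hum
    rw [coA_self, coA_self, coA_top]
    ring

-- chunk 4: derivative of termE and main iteration formula
lemma hasDerivAt_termE (K : ℤ) (γ : SL2R) {f : ℂ → ℂ} (hf : DifferentiableOn ℂ f UHP)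
    (m r : ℕ) {τ : ℂ} (hτ : τ ∈ UHP) :
    HasDerivAt (termE K γ f m r)
      ((2 * ↑Real.pi * I) *
        (-((K : ℂ) + m + r) * cE γ * coA K γ m r *
            ((jj γ τ) ^ (-(K + (m+1) + r) : ℤ) * Dop^[r] f (mact γ τ))
          + coA K γ m r *
            ((jj γ τ) ^ (-(K + (m+1) + (r+1)) : ℤ) * Dop^[r+1] f (mact γ τ)))) τ := by
  have hne : jj γ τ ≠ 0 := jj_ne γ hτ
  have hmem : mact γ τ ∈ UHP := mact_mem γ hτ
  -- derivative of σ ↦ (jj γ σ) ^ e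
  have h1 : HasDerivAt (fun σ : ℂ => (jj γ σ) ^ (-(K + m + r) : ℤ))
      (((-(K + m + r) : ℤ) : ℂ) * (jj γ τ) ^ ((-(K + m + r) : ℤ) - 1) * ((γ.1 1 0 : ℝ) : ℂ)) τ :=
    (hasDerivAt_zpow (-(K + m + r) : ℤ) (jj γ τ) (Or.inl hne)).comp τ (hasDerivAt_jj γ τ)
  -- derivative of σ ↦ Dop^[r] f (mact γ σ)
  have hfd : HasDerivAt (Dop^[r] f)
      ((2 * ↑Real.pi * I) * Dop^[r+1] f (mact γ τ)) (mact γ τ) := by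
    have h := ((diffOn_iter hf r).differentiableAt
      (isOpen_UHP.mem_nhds hmem)).hasDerivAt
    rwa [deriv_iter_eq] at h
  have h2 : HasDerivAt (fun σ : ℂ => Dop^[r] f (mact γ σ))
      (((2 * ↑Real.pi * I) * Dop^[r+1] f (mact γ τ)) * (jj γ τ) ^ (-2 : ℤ)) τ :=
    hfd.comp τ (hasDerivAt_mact γ hτ)
  have h3 := (h1.mul h2).const_mul (coA K γ m r)
  have hfun : termE K γ f m r = fun σ =>
      coA K γ m r * ((jj γ σ) ^ (-(K + m + r) : ℤ) * Dop^[r] f (mact γ σ)) := rfl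
  rw [hfun]
  refine h3.congr_deriv ?_
  have ez1 : (jj γ τ) ^ ((-(K + m + r) : ℤ) - 1) = (jj γ τ) ^ (-(K + (m+1) + r) : ℤ) := by
    congr 1; push_cast; ring
  have ez2 : (jj γ τ) ^ (-(K + m + r) : ℤ) * (jj γ τ) ^ (-2 : ℤ)
      = (jj γ τ) ^ (-(K + (m+1) + (r+1)) : ℤ) := by
    rw [← zpow_add₀ hne]; congr 1; push_cast; ring
  rw [← ez2, ← ez1]
  have hc : ((γ.1 1 0 : ℝ) : ℂ) = (2 * ↑Real.pi * I) * cE γ := by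
    rw [cE, ← mul_assoc, mul_inv_cancel₀ Complex.two_pi_I_ne_zero, one_mul]
  rw [hc]
  push_cast
  ring

lemma iter_slash (K : ℤ) (γ : SL2R) {f : ℂ → ℂ} (hf : DifferentiableOn ℂ f UHP) :
    ∀ m : ℕ, ∀ τ ∈ UHP, Dop^[m] (slashK K γ f) τ = ∑ r ∈ range (m+1), termE K γ f m r τ := by
  intro m
  induction m with
  | zero =>
      intro τ hτ
      simp only [Function.iterate_zero, id_eq, range_one, sum_singleton, termE, coA,
        Nat.choose_self, Nat.sub_self, Nat.cast_one, pow_zero, range_zero, prod_empty,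
        Nat.cast_zero, Nat.cast_ofNat, slashK, jj]
      norm_num
  | succ m ih =>
      intro τ hτ
      rw [Function.iterate_succ_apply']
      show (2 * ↑Real.pi * I)⁻¹ * deriv (Dop^[m] (slashK K γ f)) τ = _
      have hev : Dop^[m] (slashK K γ f) =ᶠ[nhds τ]
          (fun σ => ∑ r ∈ range (m+1), termE K γ f m r σ) :=
        Filter.eventuallyEq_of_mem (isOpen_UHP.mem_nhds hτ) (fun σ hσ => ih σ hσ)
      rw [hev.deriv_eq]
      have hsum : HasDerivAt (fun σ => ∑ r ∈ range (m+1), termE K γ f m r σ)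
          (∑ r ∈ range (m+1), (2 * ↑Real.pi * I) *
            (-((K : ℂ) + m + r) * cE γ * coA K γ m r *
                ((jj γ τ) ^ (-(K + (m+1) + r) : ℤ) * Dop^[r] f (mact γ τ))
              + coA K γ m r *
                ((jj γ τ) ^ (-(K + (m+1) + (r+1)) : ℤ) * Dop^[r+1] f (mact γ τ)))) τ :=
        HasDerivAt.fun_sum (fun r _ => hasDerivAt_termE K γ hf m r hτ)
      rw [hsum.deriv, Finset.mul_sum]
      -- simplify the (2πi)⁻¹ factor
      have hstep : ∀ r ∈ range (m+1),
          (2 * ↑Real.pi * I)⁻¹ * ((2 * ↑Real.pi * I) *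
            (-((K : ℂ) + m + r) * cE γ * coA K γ m r *
                ((jj γ τ) ^ (-(K + (m+1) + r) : ℤ) * Dop^[r] f (mact γ τ))
              + coA K γ m r *
                ((jj γ τ) ^ (-(K + (m+1) + (r+1)) : ℤ) * Dop^[r+1] f (mact γ τ))))
          = -((K : ℂ) + m + r) * cE γ * coA K γ m r *
                ((jj γ τ) ^ (-(K + (m+1) + r) : ℤ) * Dop^[r] f (mact γ τ))
              + coA K γ m r *
                ((jj γ τ) ^ (-(K + (m+1) + (r+1)) : ℤ) * Dop^[r+1] f (mact γ τ)) := by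
        intro r _
        rw [← mul_assoc, inv_mul_cancel₀ Complex.two_pi_I_ne_zero, one_mul]
      rw [Finset.sum_congr rfl hstep]
      -- now the reindexing
      set P : ℕ → ℂ := fun r => (jj γ τ) ^ (-(K + (m+1) + r) : ℤ) * Dop^[r] f (mact γ τ) with hP
      have hterm : ∀ r, termE K γ f (m+1) r τ = coA K γ (m+1) r * P r := fun r => rfl
      calc ∑ r ∈ range (m+1),
            (-((K : ℂ) + m + r) * cE γ * coA K γ m r * P r + coA K γ m r * P (r+1))
          = ∑ r ∈ range (m+1), -((K : ℂ) + m + r) * cE γ * coA K γ m r * P r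
            + ∑ r ∈ range (m+1), coA K γ m r * P (r+1) := by
            rw [Finset.sum_add_distrib]
        _ = ∑ r ∈ range (m+2), -((K : ℂ) + m + r) * cE γ * coA K γ m r * P r
            + ∑ r ∈ range (m+1), coA K γ m r * P (r+1) := by
            rw [Finset.sum_range_succ (fun r => -((K : ℂ) + m + r) * cE γ * coA K γ m r * P r) (m+1)]
            rw [coA_top]
            ring
        _ = ∑ r ∈ range (m+2), termE K γ f (m+1) r τ := by
            rw [Finset.sum_range_succ' (fun r => termE K γ f (m+1) r τ) (m+1)]
            rw [Finset.sum_range_succ' (fun r => -((K : ℂ) + m + r) * cE γ * coA K γ m r * P r) (m+1)]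
            simp only [hterm]
            rw [coA_zero]
            have : ∀ u ∈ range (m+1),
                coA K γ (m+1) (u+1) * P (u+1)
                  = -((K : ℂ) + m + (u+1)) * cE γ * coA K γ m (u+1) * P (u+1)
                    + coA K γ m u * P (u+1) := by
              intro u hu
              rw [coA_succ K γ m u (by simpa using Nat.lt_succ_iff.mp (mem_range.mp hu))]
              push_cast
              ring
            rw [Finset.sum_congr rfl this, Finset.sum_add_distrib]
            push_cast
            ring
      

-- chunk 5: combinatorial collapse
lemma fact_ne (x : ℕ) : ((x.factorial : ℂ)) ≠ 0 :=
  Nat.cast_ne_zero.mpr (Nat.factorial_ne_zero x)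

lemma choose_cast_eq (a b : ℕ) (h : b ≤ a) :
    ((a.choose b : ℕ) : ℂ) = (a.factorial : ℂ) / ((b.factorial : ℂ) * ((a - b).factorial : ℂ)) := by
  rw [eq_div_iff (by exact mul_ne_zero (fact_ne b) (fact_ne (a - b))), ← mul_assoc]
  exact_mod_cast congrArg (Nat.cast : ℕ → ℂ) (Nat.choose_mul_factorial_mul_factorial h)

lemma prod_shift_K (k : ℤ) (n r t u v : ℕ) (hn : n = r + t + u + v) :
    (∏ a ∈ range u, ((k : ℂ) + (r : ℂ) + (a : ℂ)))
      = ∏ a ∈ range u, (((n : ℂ) + (k : ℂ) - 1) - ((t + v + a : ℕ) : ℂ)) := by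
  subst hn
  rw [← Finset.prod_range_reflect (fun a => (k : ℂ) + (r : ℂ) + (a : ℂ)) u]
  apply Finset.prod_congr rfl
  intro j hj
  have hj' : j < u := mem_range.mp hj
  have h1 : u - 1 - j = u - (1 + j) := by omega
  rw [h1, Nat.cast_sub (by omega : 1 + j ≤ u)]
  push_cast
  ring

lemma prod_shift_L (l : ℤ) (n r t u v : ℕ) (hn : n = r + t + u + v) :
    (∏ a ∈ range v, ((l : ℂ) + (t : ℂ) + (a : ℂ)))
      = ∏ a ∈ range v, (((n : ℂ) + (l : ℂ) - 1) - ((r + u + a : ℕ) : ℂ)) := by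
  subst hn
  rw [← Finset.prod_range_reflect (fun a => (l : ℂ) + (t : ℂ) + (a : ℂ)) v]
  apply Finset.prod_congr rfl
  intro j hj
  have hj' : j < v := mem_range.mp hj
  have h1 : v - 1 - j = v - (1 + j) := by omega
  rw [h1, Nat.cast_sub (by omega : 1 + j ≤ v)]
  push_cast
  ring

lemma per_term (k l : ℤ) (n r t u v : ℕ) (hn : n = r + t + u + v) (c j F G : ℂ) (hj : j ≠ 0) :
    (-1 : ℂ) ^ (r + u) * genChooseC ((n : ℂ) + (k : ℂ) - 1) (t + v)
        * genChooseC ((n : ℂ) + (l : ℂ) - 1) (r + u)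
        * (((r + u).choose r : ℂ) * (-1 : ℂ) ^ u * (∏ a ∈ range u, ((k : ℂ) + (r : ℂ) + (a : ℂ)))
            * c ^ u * (j ^ (-(k + (r + u : ℕ) + r) : ℤ) * F))
        * (((t + v).choose t : ℂ) * (-1 : ℂ) ^ v * (∏ a ∈ range v, ((l : ℂ) + (t : ℂ) + (a : ℂ)))
            * c ^ v * (j ^ (-(l + (t + v : ℕ) + t) : ℤ) * G))
      = ((-1 : ℂ) ^ r * (-1 : ℂ) ^ (u + v)
          * (∏ a ∈ range (t + u + v), (((n : ℂ) + (k : ℂ) - 1) - (a : ℂ)))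
          * (∏ a ∈ range (r + u + v), (((n : ℂ) + (l : ℂ) - 1) - (a : ℂ)))
          * ((r.factorial : ℂ) * (t.factorial : ℂ) * ((u + v).factorial : ℂ))⁻¹
          * c ^ (u + v) * j ^ (-(k + l + (n : ℕ) + r + t) : ℤ) * F * G)
        * ((-1 : ℂ) ^ u * ((u + v).choose u : ℂ)) := by
  have hK : (∏ a ∈ range (t + u + v), (((n : ℂ) + (k : ℂ) - 1) - (a : ℂ)))
      = (∏ a ∈ range (t + v), (((n : ℂ) + (k : ℂ) - 1) - (a : ℂ)))
        * (∏ a ∈ range u, ((k : ℂ) + (r : ℂ) + (a : ℂ))) := by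
    rw [prod_shift_K k n r t u v hn, show t + u + v = (t + v) + u by omega,
      Finset.prod_range_add (fun a => (((n : ℂ) + (k : ℂ) - 1) - (a : ℂ))) (t + v) u]
  have hL : (∏ a ∈ range (r + u + v), (((n : ℂ) + (l : ℂ) - 1) - (a : ℂ)))
      = (∏ a ∈ range (r + u), (((n : ℂ) + (l : ℂ) - 1) - (a : ℂ)))
        * (∏ a ∈ range v, ((l : ℂ) + (t : ℂ) + (a : ℂ))) := by
    rw [prod_shift_L l n r t u v hn, show r + u + v = (r + u) + v by omega,
      Finset.prod_range_add (fun a => (((n : ℂ) + (l : ℂ) - 1) - (a : ℂ))) (r + u) v]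
  have hjpow : j ^ (-(k + (r + u : ℕ) + r) : ℤ) * j ^ (-(l + (t + v : ℕ) + t) : ℤ)
      = j ^ (-(k + l + (n : ℕ) + r + t) : ℤ) := by
    rw [← zpow_add₀ hj]
    congr 1
    subst hn
    push_cast
    ring
  rw [hK, hL, ← hjpow]
  rw [choose_cast_eq (r + u) r (Nat.le_add_right r u),
    choose_cast_eq (t + v) t (Nat.le_add_right t v),
    choose_cast_eq (u + v) u (Nat.le_add_right u v)]
  simp only [Nat.add_sub_cancel_left, genChooseC]
  set A1 := ∏ a ∈ range (t + v), (((n : ℂ) + (k : ℂ) - 1) - (a : ℂ)) with hA1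
  set A2 := ∏ a ∈ range u, ((k : ℂ) + (r : ℂ) + (a : ℂ)) with hA2
  set A3 := ∏ a ∈ range (r + u), (((n : ℂ) + (l : ℂ) - 1) - (a : ℂ)) with hA3
  set A4 := ∏ a ∈ range v, ((l : ℂ) + (t : ℂ) + (a : ℂ)) with hA4
  set J1 := j ^ (-(k + (r + u : ℕ) + r) : ℤ) with hJ1
  set J2 := j ^ (-(l + (t + v : ℕ) + t) : ℤ) with hJ2
  have e1 := fact_ne (r + u)
  have e2 := fact_ne (t + v)
  have e3 := fact_ne (u + v)
  have e4 := fact_ne r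
  have e5 := fact_ne t
  have e6 := fact_ne u
  have e7 := fact_ne v
  generalize ((r + u).factorial : ℂ) = X1 at *
  generalize ((t + v).factorial : ℂ) = X2 at *
  generalize ((u + v).factorial : ℂ) = X3 at *
  generalize (r.factorial : ℂ) = X4 at *
  generalize (t.factorial : ℂ) = X5 at *
  generalize (u.factorial : ℂ) = X6 at *
  generalize (v.factorial : ℂ) = X7 at *
  field_simp
  ring

lemma alt_sum_choose_C (s : ℕ) :
    ∑ u ∈ range (s + 1), (-1 : ℂ) ^ u * (s.choose u : ℂ) = if s = 0 then 1 else 0 := by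
  have h := Int.alternating_sum_range_choose (n := s)
  have h2 := congrArg (Int.cast : ℤ → ℂ) h
  push_cast at h2
  rw [h2]

-- chunk 6: inner sum
lemma coA_choose_zero {K : ℤ} {γ : SL2R} {m r : ℕ} (h : m < r) : coA K γ m r = 0 := by
  simp [coA, Nat.choose_eq_zero_of_lt h]

set_option maxHeartbeats 1000000 in
lemma RCinner_sum (γ : SL2R) (k l : ℤ) (n r t : ℕ) {τ : ℂ} (hτ : τ ∈ UHP) (F G : ℂ) :
    ∑ i ∈ range (n + 1),
      (-1 : ℂ) ^ i * genChooseC ((n : ℂ) + (k : ℂ) - 1) (n - i)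
        * genChooseC ((n : ℂ) + (l : ℂ) - 1) i
        * (coA k γ i r * ((jj γ τ) ^ (-(k + i + r) : ℤ) * F))
        * (coA l γ (n - i) t * ((jj γ τ) ^ (-(l + (n - i : ℕ) + t) : ℤ) * G))
    = if n = r + t then
        (-1 : ℂ) ^ r * genChooseC ((n : ℂ) + (k : ℂ) - 1) (n - r)
          * genChooseC ((n : ℂ) + (l : ℂ) - 1) r
          * ((jj γ τ) ^ (-(k + l + 2 * n) : ℤ)) * F * G
      else 0 := by
  have hj : jj γ τ ≠ 0 := jj_ne γ hτ
  set j := jj γ τ with hjdef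
  set c := cE γ with hcdef
  by_cases hrt : r + t ≤ n
  · -- main case
    obtain ⟨s, hs⟩ : ∃ s, n = r + t + s := ⟨n - r - t, by omega⟩
    -- restrict the sum
    have hzero : ∀ i ∈ range (n + 1), i ∉ Ico r (n - t + 1) →
        (-1 : ℂ) ^ i * genChooseC ((n : ℂ) + (k : ℂ) - 1) (n - i)
          * genChooseC ((n : ℂ) + (l : ℂ) - 1) i
          * (coA k γ i r * (j ^ (-(k + i + r) : ℤ) * F))
          * (coA l γ (n - i) t * (j ^ (-(l + (n - i : ℕ) + t) : ℤ) * G)) = 0 := by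
      intro i hi hni
      rw [mem_range] at hi
      rw [mem_Ico] at hni
      rcases Nat.lt_or_ge i r with h | h
      · rw [coA_choose_zero h]; ring
      · have : n - i < t := by omega
        rw [coA_choose_zero this]; ring
    rw [← Finset.sum_subset (fun i hi => mem_range.mpr (by rw [mem_Ico] at hi; omega)) hzero]
    rw [Finset.sum_Ico_eq_sum_range]
    have hlen : n - t + 1 - r = s + 1 := by omega
    rw [hlen]
    -- rewrite each term via per_term
    have hterm : ∀ u ∈ range (s + 1),
        (-1 : ℂ) ^ (r + u) * genChooseC ((n : ℂ) + (k : ℂ) - 1) (n - (r + u))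
          * genChooseC ((n : ℂ) + (l : ℂ) - 1) (r + u)
          * (coA k γ (r + u) r * (j ^ (-(k + (r + u : ℕ) + r) : ℤ) * F))
          * (coA l γ (n - (r + u)) t * (j ^ (-(l + (n - (r + u) : ℕ) + t) : ℤ) * G))
        = ((-1 : ℂ) ^ r * (-1 : ℂ) ^ s
            * (∏ a ∈ range (t + s), (((n : ℂ) + (k : ℂ) - 1) - (a : ℂ)))
            * (∏ a ∈ range (r + s), (((n : ℂ) + (l : ℂ) - 1) - (a : ℂ)))
            * ((r.factorial : ℂ) * (t.factorial : ℂ) * (s.factorial : ℂ))⁻¹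
            * c ^ s * j ^ (-(k + l + (n : ℕ) + r + t) : ℤ) * F * G)
          * ((-1 : ℂ) ^ u * (s.choose u : ℂ)) := by
      intro u hu
      rw [mem_range] at hu
      set v := s - u with hvdef
      have huv : s = u + v := by omega
      have h1 : n - (r + u) = t + v := by omega
      have h2 : coA k γ (r + u) r
          = ((r + u).choose r : ℂ) * (-1 : ℂ) ^ u
            * (∏ a ∈ range u, ((k : ℂ) + (r : ℂ) + (a : ℂ))) * c ^ u := by
        simp only [coA, Nat.add_sub_cancel_left, hcdef]
      have h3 : coA l γ (t + v) t
          = ((t + v).choose t : ℂ) * (-1 : ℂ) ^ v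
            * (∏ a ∈ range v, ((l : ℂ) + (t : ℂ) + (a : ℂ))) * c ^ v := by
        simp only [coA, Nat.add_sub_cancel_left, hcdef]
      rw [h1, h2, h3]
      have := per_term k l n r t u v (by omega) c j F G hj
      rw [this]
      rw [show t + u + v = t + s by omega, show r + u + v = r + s by omega,
        show u + v = s from huv.symm]
    rw [Finset.sum_congr rfl hterm, ← Finset.mul_sum, alt_sum_choose_C]
    by_cases hs0 : s = 0
    · subst hs0
      have hn : n = r + t := by omega
      rw [if_pos hn, if_pos rfl]
      have hnr : n - r = t := by omega
      simp only [genChooseC, hnr, Nat.add_zero, mul_one, Nat.factorial_zero, Nat.cast_one, pow_zero]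
      have hjp : j ^ (-(k + l + (n : ℕ) + r + t) : ℤ) = j ^ (-(k + l + 2 * n) : ℤ) := by
        congr 1; omega
      rw [hjp]
      simp only [genChooseC, div_eq_mul_inv, mul_inv]
      ring
    · rw [if_neg hs0, if_neg (show ¬ n = r + t by omega)]
      ring
  · -- degenerate case: r + t > n
    rw [if_neg (by omega)]
    apply Finset.sum_eq_zero
    intro i hi
    rw [mem_range] at hi
    rcases Nat.lt_or_ge i r with h | h
    · rw [coA_choose_zero h]; ring
    · have : n - i < t := by omega
      rw [coA_choose_zero this]; ring

-- chunk 7: congruence of iterates and final assembly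
lemma iter_congr {h1 h2 : ℂ → ℂ} (h : ∀ τ ∈ UHP, h1 τ = h2 τ) (r : ℕ) :
    ∀ τ ∈ UHP, Dop^[r] h1 τ = Dop^[r] h2 τ := by
  induction r with
  | zero => simpa using h
  | succ r ih =>
      intro τ hτ
      rw [Function.iterate_succ_apply', Function.iterate_succ_apply']
      show (2 * ↑Real.pi * I)⁻¹ * deriv (Dop^[r] h1) τ = (2 * ↑Real.pi * I)⁻¹ * deriv (Dop^[r] h2) τ
      congr 1
      exact Filter.EventuallyEq.deriv_eq
        (Filter.eventuallyEq_of_mem (isOpen_UHP.mem_nhds hτ) (fun σ hσ => ih σ hσ))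

set_option maxHeartbeats 1000000 in
lemma RC_main (k l : ℤ) (f g : ℂ → ℂ)
    (hf : DifferentiableOn ℂ f UHP) (hg : DifferentiableOn ℂ g UHP) (n : ℕ)
    (γ : SL2R) {τ : ℂ} (hτ : τ ∈ UHP) :
    RCbracketZ (slashK k γ f) (slashK l γ g) k l n τ =
      slashK (k + l + 2 * n) γ (RCbracketZ f g k l n) τ := by
  have hj : jj γ τ ≠ 0 := jj_ne γ hτ
  rw [RCbracketZ]
  have step1 : ∀ i ∈ range (n + 1),
      (-1 : ℂ) ^ i * genChooseC ((n : ℂ) + (k : ℂ) - 1) (n - i) *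
        genChooseC ((n : ℂ) + (l : ℂ) - 1) i * Dop^[i] (slashK k γ f) τ
        * Dop^[n - i] (slashK l γ g) τ
      = ∑ r ∈ range (n + 1), ∑ t ∈ range (n + 1),
          (-1 : ℂ) ^ i * genChooseC ((n : ℂ) + (k : ℂ) - 1) (n - i) *
            genChooseC ((n : ℂ) + (l : ℂ) - 1) i
            * (coA k γ i r * ((jj γ τ) ^ (-(k + i + r) : ℤ) * Dop^[r] f (mact γ τ)))
            * (coA l γ (n - i) t
                * ((jj γ τ) ^ (-(l + (n - i : ℕ) + t) : ℤ) * Dop^[t] g (mact γ τ))) := by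
    intro i hi
    rw [mem_range] at hi
    rw [iter_slash k γ hf i τ hτ, iter_slash l γ hg (n - i) τ hτ]
    have hfe : ∑ r ∈ range (i + 1), termE k γ f i r τ
        = ∑ r ∈ range (n + 1), termE k γ f i r τ := by
      apply Finset.sum_subset (Finset.range_subset_range.mpr (by omega))
      intro r _ hr
      rw [mem_range] at hr
      simp only [termE, coA_choose_zero (show i < r by omega), zero_mul]
    have hge : ∑ t ∈ range (n - i + 1), termE l γ g (n - i) t τ
        = ∑ t ∈ range (n + 1), termE l γ g (n - i) t τ := by
      apply Finset.sum_subset (Finset.range_subset_range.mpr (by omega))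
      intro t _ ht
      rw [mem_range] at ht
      simp only [termE, coA_choose_zero (show n - i < t by omega), zero_mul]
    rw [hfe, hge, mul_assoc, Finset.sum_mul_sum, Finset.mul_sum]
    apply Finset.sum_congr rfl
    intro r _
    rw [Finset.mul_sum]
    apply Finset.sum_congr rfl
    intro t _
    simp only [termE]
    ring
  rw [Finset.sum_congr rfl step1]
  rw [Finset.sum_comm]
  have step2 : ∀ r ∈ range (n + 1),
      (∑ i ∈ range (n + 1), ∑ t ∈ range (n + 1),
        (-1 : ℂ) ^ i * genChooseC ((n : ℂ) + (k : ℂ) - 1) (n - i) *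
          genChooseC ((n : ℂ) + (l : ℂ) - 1) i
          * (coA k γ i r * ((jj γ τ) ^ (-(k + i + r) : ℤ) * Dop^[r] f (mact γ τ)))
          * (coA l γ (n - i) t
              * ((jj γ τ) ^ (-(l + (n - i : ℕ) + t) : ℤ) * Dop^[t] g (mact γ τ))))
      = (-1 : ℂ) ^ r * genChooseC ((n : ℂ) + (k : ℂ) - 1) (n - r)
          * genChooseC ((n : ℂ) + (l : ℂ) - 1) r
          * ((jj γ τ) ^ (-(k + l + 2 * n) : ℤ)) * Dop^[r] f (mact γ τ)
          * Dop^[n - r] g (mact γ τ) := by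
    intro r hr
    rw [mem_range] at hr
    rw [Finset.sum_comm]
    have step3 : ∀ t ∈ range (n + 1),
        (∑ i ∈ range (n + 1),
          (-1 : ℂ) ^ i * genChooseC ((n : ℂ) + (k : ℂ) - 1) (n - i) *
            genChooseC ((n : ℂ) + (l : ℂ) - 1) i
            * (coA k γ i r * ((jj γ τ) ^ (-(k + i + r) : ℤ) * Dop^[r] f (mact γ τ)))
            * (coA l γ (n - i) t
                * ((jj γ τ) ^ (-(l + (n - i : ℕ) + t) : ℤ) * Dop^[t] g (mact γ τ))))
        = if t = n - r then
            (-1 : ℂ) ^ r * genChooseC ((n : ℂ) + (k : ℂ) - 1) (n - r)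
              * genChooseC ((n : ℂ) + (l : ℂ) - 1) r
              * ((jj γ τ) ^ (-(k + l + 2 * n) : ℤ)) * Dop^[r] f (mact γ τ)
              * Dop^[t] g (mact γ τ)
          else 0 := by
      intro t ht
      rw [mem_range] at ht
      rw [RCinner_sum γ k l n r t hτ (Dop^[r] f (mact γ τ)) (Dop^[t] g (mact γ τ))]
      exact if_congr (by omega) rfl rfl
    rw [Finset.sum_congr rfl step3, Finset.sum_ite_eq' (range (n + 1)) (n - r)]
    rw [if_pos (mem_range.mpr (by omega))]
  rw [Finset.sum_congr rfl step2]
  show _ = (jj γ τ) ^ (-(k + l + 2 * (n : ℕ)) : ℤ) * RCbracketZ f g k l n (mact γ τ)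
  rw [RCbracketZ, Finset.mul_sum]
  apply Finset.sum_congr rfl
  intro r _
  ring


/-- Let `f, g` be modular forms of integer weights `k, ℓ` on a lattice `Γ ⊂ SL₂(ℝ)`.  Then for
every `n ≥ 0` the Rankin–Cohen bracket satisfies
`[f|_k γ, g|_ℓ γ]_n = [f,g]_n |_{k+ℓ+2n} γ` for all `γ ∈ SL₂(ℝ)`; in particular
`[f,g]_n` transforms like a modular form of weight `k+ℓ+2n` on `Γ`. -/
theorem statement13 (Γ : Subgroup SL2R) (hΓ : IsLattice Γ) (k l : ℤ) (f g : ℂ → ℂ)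
    (hf : DifferentiableOn ℂ f UHP) (hg : DifferentiableOn ℂ g UHP)
    (hfm : ∀ γ ∈ Γ, ∀ τ ∈ UHP, slashK k γ f τ = f τ)
    (hgm : ∀ γ ∈ Γ, ∀ τ ∈ UHP, slashK l γ g τ = g τ) (n : ℕ) :
    (∀ γ : SL2R, ∀ τ ∈ UHP,
        RCbracketZ (slashK k γ f) (slashK l γ g) k l n τ =
          slashK (k + l + 2 * n) γ (RCbracketZ f g k l n) τ)
    ∧ (∀ γ ∈ Γ, ∀ τ ∈ UHP,
        slashK (k + l + 2 * n) γ (RCbracketZ f g k l n) τ = RCbracketZ f g k l n τ) := by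
  have part1 : ∀ γ : SL2R, ∀ τ ∈ UHP,
      RCbracketZ (slashK k γ f) (slashK l γ g) k l n τ =
        slashK (k + l + 2 * n) γ (RCbracketZ f g k l n) τ :=
    fun γ τ hτ => RC_main k l f g hf hg n γ hτ
  refine ⟨part1, ?_⟩
  intro γ hγ τ hτ
  rw [← part1 γ τ hτ, RCbracketZ, RCbracketZ]
  apply Finset.sum_congr rfl
  intro i _
  rw [iter_congr (hfm γ hγ) i τ hτ, iter_congr (hgm γ hγ) (n - i) τ hτ]
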